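/- For every k ∈ ℕ, the additive subgroup of the quotient ring ℤ[s,t]/I_k generated by the cosets of the elements m_{λ,n}(s,t)·P_λ(s,t), where n ranges over ℕ₀ and λ over B_0(n) with |λ| ≤ k, is all of ℤ[s,t]/I_k. -/

import Mathlib

open MvPolynomial

set_option synthInstance.maxHeartbeats 1000000
set_option maxHeartbeats 2000000
set_option linter.unusedTactic false
set_option linter.unnecessarySimpa false

noncomputable section

abbrev Rxy : Type := MvPolynomial (Fin 2) ℤ

/-- The fraction field of ℤ[x,y]. -/
abbrev Kxy : Type := FractionRing Rxy

/-- The image of `x` in the fraction field. -/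
noncomputable def xx : Kxy := algebraMap Rxy Kxy (X 0)

/-- The image of `y` in the fraction field. -/
noncomputable def yy : Kxy := algebraMap Rxy Kxy (X 1)

/-- `s = x / y²`. -/
noncomputable def sv : Kxy := xx / yy ^ 2

/-- `t = y / x²`. -/
noncomputable def tv : Kxy := yy / xx ^ 2

/-- Evaluation of a two-variable integer polynomial at `(s, t)` in the fraction field. -/
noncomputable def evST (p : Rxy) : Kxy := aeval ![sv, tv] p

/-- Defining properties of the SU(3) character polynomials `Q a b`
(with the convention `Q a b = 0` whenever `(a, b) ∉ ℕ₀²`). -/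
def IsQSU3 (Q : ℤ → ℤ → Rxy) : Prop :=
  (∀ a b : ℤ, (a < 0 ∨ b < 0) → Q a b = 0) ∧
  Q 0 0 = 1 ∧
  Q 1 0 = X 0 ∧
  (∀ a b : ℤ, 0 ≤ a → 0 ≤ b →
    X 0 * Q a b = Q (a + 1) b + Q a (b - 1) + Q (a - 1) (b + 1)) ∧
  (∀ a b : ℤ, rename (Equiv.swap (0 : Fin 2) 1) (Q a b) = Q b a)

/-- Defining property of the polynomials `P a b` (in the variables `s, t`), namely
`P_λ(x/y², y/x²) = x^{-λ₁} y^{-λ₂} Q_λ(x,y)` in the fraction field of ℤ[x,y]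
(with the convention `P a b = 0` whenever `(a, b) ∉ ℕ₀²`). -/
def IsPSU3 (Q P : ℤ → ℤ → Rxy) : Prop :=
  (∀ a b : ℤ, (a < 0 ∨ b < 0) → P a b = 0) ∧
  (∀ a b : ℤ, 0 ≤ a → 0 ≤ b →
    evST (P a b) = algebraMap Rxy Kxy (Q a b) / (xx ^ a * yy ^ b))

/-- Membership of `p` in the set `B_j(n)` (for `j = 0, 1`). -/
def Bmem (j n : ℕ) (p : ℕ × ℕ) : Prop :=
  ((p.1 : ℤ) - j ≡ (p.2 : ℤ) [ZMOD 3]) ∧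
  (p.1 : ℤ) - j + 2 * p.2 ≤ 3 * n ∧
  2 * ((p.1 : ℤ) - j) + p.2 ≤ 3 * n

/-- Defining property of the monomials `m_{λ,n}(s,t)`: for `λ ∈ B_j(n)` (`j = 0, 1`),
`m j λ n` is the element of ℤ[s,t] corresponding to `x^{λ₁-j-n} y^{λ₂-n}` under the
change of variables `s = x/y²`, `t = y/x²`. -/
def IsMono (m : ℕ → ℕ × ℕ → ℕ → Rxy) : Prop :=
  ∀ j n (p : ℕ × ℕ), j ≤ 1 → Bmem j n p →
    evST (m j p n) = xx ^ ((p.1 : ℤ) - j - n) * yy ^ ((p.2 : ℤ) - n)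

lemma algMap_inj : Function.Injective (algebraMap Rxy Kxy) :=
  IsFractionRing.injective Rxy Kxy

lemma xx_ne : xx ≠ 0 := by
  simp only [xx]
  exact (map_ne_zero_iff _ algMap_inj).mpr (X_ne_zero (R := ℤ) (σ := Fin 2) 0)

lemma yy_ne : yy ≠ 0 := by
  simp only [yy]
  exact (map_ne_zero_iff _ algMap_inj).mpr (X_ne_zero (R := ℤ) (σ := Fin 2) 1)

noncomputable def evSTh : Rxy →ₐ[ℤ] Kxy := aeval ![sv, tv]

lemma evST_eq (p : Rxy) : evST p = evSTh p := rfl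

@[simp] lemma evST_add (p q : Rxy) : evST (p + q) = evST p + evST q := by
  simp only [evST_eq, map_add]
@[simp] lemma evST_sub (p q : Rxy) : evST (p - q) = evST p - evST q := by
  simp only [evST_eq, map_sub]
@[simp] lemma evST_mul (p q : Rxy) : evST (p * q) = evST p * evST q := by
  simp only [evST_eq, map_mul]
@[simp] lemma evST_pow (p : Rxy) (n : ℕ) : evST (p ^ n) = evST p ^ n := by
  simp only [evST_eq, map_pow]
@[simp] lemma evST_one : evST 1 = 1 := by simp only [evST_eq, map_one]
@[simp] lemma evST_zero : evST 0 = 0 := by simp only [evST_eq, map_zero]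
@[simp] lemma evST_X0 : evST (X 0) = sv := by
  simp only [evST_eq, evSTh, aeval_X]; rfl
@[simp] lemma evST_X1 : evST (X 1) = tv := by
  simp only [evST_eq, evSTh, aeval_X]; rfl

noncomputable def eN (N : ℕ) (mu : Fin 2 →₀ ℕ) : Fin 2 →₀ ℕ :=
  Finsupp.single 0 (mu 0 + 2*N - 2*(mu 1)) + Finsupp.single 1 (mu 1 + 2*N - 2*(mu 0))

lemma eN_apply0 (N : ℕ) (mu : Fin 2 →₀ ℕ) : eN N mu 0 = mu 0 + 2*N - 2*(mu 1) := by
  simp [eN, Finsupp.single_apply]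

lemma eN_apply1 (N : ℕ) (mu : Fin 2 →₀ ℕ) : eN N mu 1 = mu 1 + 2*N - 2*(mu 0) := by
  simp [eN, Finsupp.single_apply]

lemma expon_le {p : Rxy} {mu : Fin 2 →₀ ℕ} (h : mu ∈ p.support) (i : Fin 2) :
    mu i ≤ p.totalDegree := by
  have h1 : (mu.sum fun _ e => e) ≤ p.totalDegree := le_totalDegree h
  have h2 : (mu.sum fun _ e => e) = mu 0 + mu 1 := by
    rw [Finsupp.sum_fintype]
    · exact Fin.sum_univ_two _
    · intro; rfl
  fin_cases i
  · show mu 0 <= p.totalDegree; omega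
  · show mu 1 <= p.totalDegree; omega

lemma pow_key (a b N : ℕ) (ha : a ≤ N) (hb : b ≤ N) :
    xx ^ (a + 2*N - 2*b) * yy ^ (b + 2*N - 2*a) = sv ^ a * tv ^ b * (xx*yy)^(2*N) := by
  have hx := xx_ne; have hy := yy_ne
  rw [sv, tv, div_pow, div_pow, div_mul_div_comm, div_mul_eq_mul_div, eq_div_iff (mul_ne_zero (pow_ne_zero _ (pow_ne_zero _ hy)) (pow_ne_zero _ (pow_ne_zero _ hx)))]
  rw [show (yy^2)^a * (xx^2)^b = yy^(2*a) * xx^(2*b) by rw [← pow_mul, ← pow_mul]]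
  rw [mul_pow xx yy]
  calc xx ^ (a + 2*N - 2*b) * yy ^ (b + 2*N - 2*a) * (yy ^ (2*a) * xx ^ (2*b))
      = (xx ^ (a + 2*N - 2*b) * xx ^ (2*b)) * (yy ^ (b + 2*N - 2*a) * yy ^ (2*a)) := by ring
    _ = xx ^ (a + 2*N) * yy ^ (b + 2*N) := by
        rw [← pow_add, ← pow_add]; congr 1 <;> congr 1 <;> omega
    _ = xx ^ a * yy ^ b * (xx ^ (2*N) * yy ^ (2*N)) := by
        rw [pow_add, pow_add]; ring

lemma C_int (c : ℤ) : (C c : Rxy) = (c : Rxy) := by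
  simp

lemma alg_monomial (nu : Fin 2 →₀ ℕ) (c : ℤ) :
    algebraMap Rxy Kxy (monomial nu c) = (c : Kxy) * (xx ^ (nu 0) * yy ^ (nu 1)) := by
  rw [monomial_eq, Finsupp.prod_pow, Fin.prod_univ_two, C_int]
  rw [map_mul, map_mul, map_pow, map_pow, map_intCast]
  rfl

lemma evST_monomial (nu : Fin 2 →₀ ℕ) (c : ℤ) :
    evST (monomial nu c) = (c : Kxy) * (sv ^ (nu 0) * tv ^ (nu 1)) := by
  rw [evST_eq, evSTh, aeval_monomial, Finsupp.prod_pow, Fin.prod_univ_two]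
  simp

lemma mapDomain_key (N : ℕ) (p : Rxy) (hN : p.totalDegree ≤ N) :
    algebraMap Rxy Kxy (AddMonoidAlgebra.mapDomain (eN N) p) = evST p * (xx*yy)^(2*N) := by
  conv_lhs => rw [← support_sum_monomial_coeff p]
  conv_rhs => rw [← support_sum_monomial_coeff p]
  rw [show AddMonoidAlgebra.mapDomain (eN N) (∑ mu ∈ p.support, monomial mu (coeff mu p))
      = ∑ mu ∈ p.support, monomial (eN N mu) (coeff mu p) from
    (map_sum (AddMonoidHom.mk' (M := Rxy) (G := Rxy) (AddMonoidAlgebra.mapDomain (eN N))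
      (fun a b => AddMonoidAlgebra.mapDomain_add _ a b)) _ _).trans (Finset.sum_congr rfl fun mu _ => by
        rw [← single_eq_monomial, ← single_eq_monomial]
        exact AddMonoidAlgebra.mapDomain_single)]
  rw [map_sum]
  have : evST (∑ mu ∈ p.support, monomial mu (coeff mu p))
      = ∑ mu ∈ p.support, evST (monomial mu (coeff mu p)) := by
    rw [evST_eq, map_sum]; rfl
  rw [this, Finset.sum_mul]
  apply Finset.sum_congr rfl
  intro mu hmu
  rw [alg_monomial, evST_monomial, eN_apply0, eN_apply1]
  rw [mul_assoc, pow_key (mu 0) (mu 1) N (le_trans (expon_le hmu 0) hN) (le_trans (expon_le hmu 1) hN)]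

theorem evST_inj : Function.Injective evST := by
  have h0 : ∀ p : Rxy, evST p = 0 → p = 0 := by
    intro p hp
    have hkey := mapDomain_key p.totalDegree p le_rfl
    rw [hp, zero_mul] at hkey
    have hq : AddMonoidAlgebra.mapDomain (eN p.totalDegree) p = (0 : Rxy) := by
      apply algMap_inj
      rw [hkey, map_zero]
    have hinj : Set.InjOn (eN p.totalDegree) (p.support : Set (Fin 2 →₀ ℕ)) := by
      intro mu hmu nu hnu h
      have e0 := DFunLike.congr_fun h (0 : Fin 2)
      have e1 := DFunLike.congr_fun h (1 : Fin 2)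
      rw [eN_apply0, eN_apply0] at e0
      rw [eN_apply1, eN_apply1] at e1
      have b0 := expon_le (Finset.mem_coe.mp hmu) 0
      have b1 := expon_le (Finset.mem_coe.mp hmu) 1
      have c0 := expon_le (Finset.mem_coe.mp hnu) 0
      have c1 := expon_le (Finset.mem_coe.mp hnu) 1
      ext i
      fin_cases i
      · show mu 0 = nu 0; omega
      · show mu 1 = nu 1; omega
    have hq' : Finsupp.mapDomain (eN p.totalDegree) (AddMonoidAlgebra.coeff p)
        = Finsupp.mapDomain (eN p.totalDegree) (AddMonoidAlgebra.coeff (0 : Rxy)) := by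
      have h3 := congrArg AddMonoidAlgebra.coeff hq
      change Finsupp.mapDomain _ (AddMonoidAlgebra.coeff p) = AddMonoidAlgebra.coeff 0 at h3
      rw [h3]; simp
    have := AddMonoidAlgebra.coeff_injective (Finsupp.mapDomain_injOn (p.support : Set (Fin 2 →₀ ℕ)) hinj
      (show AddMonoidAlgebra.coeff p ∈ {w : (Fin 2 →₀ ℕ) →₀ ℤ | ↑w.support ⊆ (p.support : Set (Fin 2 →₀ ℕ))} from
        Set.mem_setOf.mpr (subset_refl _))
      (show AddMonoidAlgebra.coeff (0 : Rxy) ∈ {w : (Fin 2 →₀ ℕ) →₀ ℤ | ↑w.support ⊆ (p.support : Set (Fin 2 →₀ ℕ))} from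
        Set.mem_setOf.mpr (by simp))
      hq')
    exact this
  intro p q h
  have h2 : p - q = 0 := h0 _ (by rw [evST_sub, h, sub_self])
  exact sub_eq_zero.mp h2

lemma svtv : sv * tv = xx⁻¹ * yy⁻¹ := by
  rw [sv, tv]
  field_simp [xx_ne, yy_ne]

lemma dd (A : Kxy) (a b : ℤ) : A / (xx ^ a * yy ^ b) = A * xx ^ (-a) * yy ^ (-b) := by
  rw [zpow_neg, zpow_neg, div_eq_mul_inv, mul_inv, mul_assoc]

lemma combineR1 (A A1 A2 A3 : Kxy) (a b : ℤ) (key : xx * A = A1 + A2 + A3) :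
    A / (xx ^ a * yy ^ b) =
      A1 / (xx ^ (a+1) * yy ^ b) + sv * tv * (A2 / (xx ^ a * yy ^ (b-1)))
        + tv * (A3 / (xx ^ (a-1) * yy ^ (b+1))) := by
  have hx := xx_ne; have hy := yy_ne
  have hA : A = xx⁻¹ * (A1 + A2 + A3) := by
    rw [← key, ← mul_assoc, inv_mul_cancel₀ hx, one_mul]
  rw [hA, dd, dd, dd, dd, svtv]
  have htv : tv = yy * (xx⁻¹ * xx⁻¹) := by
    rw [tv, pow_two, div_eq_mul_inv, mul_inv]
  rw [htv]
  have ex1 : xx ^ (-(a+1)) = xx ^ (-a) * xx⁻¹ := by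
    rw [← zpow_neg_one, ← zpow_add₀ hx]; congr 1; ring
  have ey1 : yy ^ (-(b-1)) = yy ^ (-b) * yy := by
    rw [show -(b-1) = -b + 1 by ring, zpow_add₀ hy, zpow_one]
  have ex2 : xx ^ (-(a-1)) = xx ^ (-a) * xx := by
    rw [show -(a-1) = -a + 1 by ring, zpow_add₀ hx, zpow_one]
  have ey2 : yy ^ (-(b+1)) = yy ^ (-b) * yy⁻¹ := by
    rw [← zpow_neg_one, ← zpow_add₀ hy]; congr 1; ring
  rw [ex1, ey1, ex2, ey2]
  have hx1 : xx * xx⁻¹ = 1 := mul_inv_cancel₀ hx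
  have hy1 : yy * yy⁻¹ = 1 := mul_inv_cancel₀ hy
  linear_combination (-(A2*(xx^(-a))*(yy^(-b))*xx⁻¹) - A3*(xx^(-a))*(yy^(-b))*xx⁻¹) * hy1
    + (-(A3*(xx^(-a))*(yy^(-b))*xx⁻¹*yy*yy⁻¹)) * hx1

lemma combineR2 (A A1 A2 A3 : Kxy) (a b : ℤ) (key : yy * A = A1 + A2 + A3) :
    A / (xx ^ a * yy ^ b) =
      A1 / (xx ^ a * yy ^ (b+1)) + sv * tv * (A2 / (xx ^ (a-1) * yy ^ b))
        + sv * (A3 / (xx ^ (a+1) * yy ^ (b-1))) := by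
  have hx := xx_ne; have hy := yy_ne
  have hA : A = yy⁻¹ * (A1 + A2 + A3) := by
    rw [← key, ← mul_assoc, inv_mul_cancel₀ hy, one_mul]
  rw [hA, dd, dd, dd, dd, svtv]
  have hsv : sv = xx * (yy⁻¹ * yy⁻¹) := by
    rw [sv, pow_two, div_eq_mul_inv, mul_inv]
  rw [hsv]
  have ey1 : yy ^ (-(b+1)) = yy ^ (-b) * yy⁻¹ := by
    rw [← zpow_neg_one, ← zpow_add₀ hy]; congr 1; ring
  have ex1 : xx ^ (-(a-1)) = xx ^ (-a) * xx := by
    rw [show -(a-1) = -a + 1 by ring, zpow_add₀ hx, zpow_one]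
  have ex2 : xx ^ (-(a+1)) = xx ^ (-a) * xx⁻¹ := by
    rw [← zpow_neg_one, ← zpow_add₀ hx]; congr 1; ring
  have ey2 : yy ^ (-(b-1)) = yy ^ (-b) * yy := by
    rw [show -(b-1) = -b + 1 by ring, zpow_add₀ hy, zpow_one]
  rw [ey1, ex1, ex2, ey2]
  have hx1 : xx * xx⁻¹ = 1 := mul_inv_cancel₀ hx
  have hy1 : yy * yy⁻¹ = 1 := mul_inv_cancel₀ hy
  linear_combination (-(A2*(xx^(-a))*(yy^(-b))*yy⁻¹) - A3*(xx^(-a))*(yy^(-b))*yy⁻¹) * hx1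
    + (-(A3*(xx^(-a))*(yy^(-b))*yy⁻¹*xx*xx⁻¹)) * hy1

section Rels

variable {Q P : ℤ → ℤ → Rxy} (hQ : IsQSU3 Q) (hP : IsPSU3 Q P)

include hQ hP in
lemma evST_P' (a b : ℤ) :
    evST (P a b) = algebraMap Rxy Kxy (Q a b) / (xx ^ a * yy ^ b) := by
  rcases le_or_gt 0 a with ha | ha
  · rcases le_or_gt 0 b with hb | hb
    · exact hP.2 a b ha hb
    · rw [hP.1 a b (Or.inr hb), hQ.1 a b (Or.inr hb), evST_zero, map_zero, zero_div]
  · rw [hP.1 a b (Or.inl ha), hQ.1 a b (Or.inl ha), evST_zero, map_zero, zero_div]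

include hQ in
lemma yrec (a b : ℤ) (ha : 0 ≤ a) (hb : 0 ≤ b) :
    X 1 * Q a b = Q a (b + 1) + Q (a - 1) b + Q (a + 1) (b - 1) := by
  have h := hQ.2.2.2.1 b a hb ha
  have h2 := congrArg (rename (Equiv.swap (0 : Fin 2) 1)) h
  rw [map_mul, rename_X, Equiv.swap_apply_left, map_add, map_add] at h2
  rw [hQ.2.2.2.2, hQ.2.2.2.2, hQ.2.2.2.2, hQ.2.2.2.2] at h2
  exact h2

include hQ hP in
lemma R1 (a b : ℤ) (ha : 0 ≤ a) (hb : 0 ≤ b) :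
    P a b = P (a+1) b + X 0 * X 1 * P a (b-1) + X 1 * P (a-1) (b+1) := by
  apply evST_inj
  simp only [evST_add, evST_mul, evST_X0, evST_X1]
  rw [evST_P' hQ hP a b, evST_P' hQ hP (a+1) b, evST_P' hQ hP a (b-1),
    evST_P' hQ hP (a-1) (b+1)]
  apply combineR1
  rw [show (xx : Kxy) = algebraMap Rxy Kxy (X 0) from rfl, ← map_mul, hQ.2.2.2.1 a b ha hb,
    map_add, map_add]

include hQ hP in
lemma R2 (a b : ℤ) (ha : 0 ≤ a) (hb : 0 ≤ b) :
    P a b = P a (b+1) + X 0 * X 1 * P (a-1) b + X 0 * P (a+1) (b-1) := by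
  apply evST_inj
  simp only [evST_add, evST_mul, evST_X0, evST_X1]
  rw [evST_P' hQ hP a b, evST_P' hQ hP a (b+1), evST_P' hQ hP (a-1) b,
    evST_P' hQ hP (a+1) (b-1)]
  apply combineR2
  rw [show (yy : Kxy) = algebraMap Rxy Kxy (X 1) from rfl, ← map_mul, yrec hQ a b ha hb,
    map_add, map_add]

include hQ hP in
lemma P00 : P 0 0 = 1 := by
  apply evST_inj
  rw [evST_P' hQ hP 0 0, hQ.2.1, evST_one, zpow_zero, zpow_zero, map_one, one_mul, div_one]

end Rels

def II (P : ℤ → ℤ → Rxy) (k : ℕ) : Ideal Rxy :=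
  Ideal.span ({P ((k : ℤ) + 1) 0, P ((k : ℤ) + 2) 0} : Set Rxy)

def Wl (P : ℤ → ℤ → Rxy) (k : ℕ) (j : ℤ) : Rxy := P ((k:ℤ)+1-j) j

def Ml (P : ℤ → ℤ → Rxy) (k : ℕ) : Ideal Rxy :=
  Ideal.span (Set.range fun j : ℕ => Wl P k j)

section Walls

variable {Q P : ℤ → ℤ → Rxy} (hQ : IsQSU3 Q) (hP : IsPSU3 Q P) {k : ℕ}

include hQ hP in
lemma star (j : ℤ) (h1 : 1 ≤ j) (h2 : j ≤ (k:ℤ)+1) :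
    X 1 * Wl P k (j+1) = Wl P k j - Wl P k (j-1) + X 0 * Wl P k (j-2) := by
  have E1 := R1 hQ hP ((k:ℤ)+1-j) j (by omega) (by omega)
  have E2 := R2 hQ hP ((k:ℤ)+2-j) (j-1) (by omega) (by omega)
  rw [show (k:ℤ)+1-j+1 = (k:ℤ)+2-j by ring, show (k:ℤ)+1-j-1 = (k:ℤ)-j by ring] at E1
  rw [show (j:ℤ)-1+1 = j by ring, show (k:ℤ)+2-j-1 = (k:ℤ)+1-j by ring,
    show (k:ℤ)+2-j+1 = (k:ℤ)+3-j by ring, show (j:ℤ)-1-1 = j-2 by ring] at E2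
  unfold Wl
  rw [show (k:ℤ)+1-(j+1) = (k:ℤ)-j by ring, show (k:ℤ)+1-(j-1) = (k:ℤ)+2-j by ring,
    show (k:ℤ)+1-(j-2) = (k:ℤ)+3-j by ring]
  linear_combination E2 - E1

include hQ hP in
lemma star0 : X 1 * Wl P k 1 = Wl P k 0 - P ((k:ℤ)+2) 0 := by
  have E1 := R1 hQ hP ((k:ℤ)+1) 0 (by omega) (by omega)
  rw [show (k:ℤ)+1+1 = (k:ℤ)+2 by ring, hP.1 ((k:ℤ)+1) (0-1) (Or.inr (by omega))] at E1
  rw [show (k:ℤ)+1-1 = (k:ℤ) by ring, show (0:ℤ)+1 = 1 by ring] at E1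
  unfold Wl
  rw [show (k:ℤ)+1-1 = (k:ℤ) by ring, show (k:ℤ)+1-0 = (k:ℤ)+1 by ring]
  linear_combination -E1

lemma Wl_zero (hP : IsPSU3 Q P) (j : ℤ) (h : (k:ℤ)+1 < j ∨ j < 0) : Wl P k j = 0 := by
  rcases h with h | h
  · exact hP.1 _ _ (Or.inl (by omega))
  · exact hP.1 _ _ (Or.inr (by omega))

lemma memII1 : P ((k:ℤ)+1) 0 ∈ II P k := Ideal.subset_span (by simp)

lemma memII2 : P ((k:ℤ)+2) 0 ∈ II P k := Ideal.subset_span (by simp)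

include hQ hP in
lemma tpow (j : ℕ) : X 1 ^ j * Wl P k j ∈ II P k := by
  induction j using Nat.strong_induction_on with
  | _ j ih =>
    match j with
    | 0 =>
      push_cast
      simpa [Wl] using memII1 (P := P) (k := k)
    | 1 =>
      push_cast
      rw [pow_one, star0 hQ hP]
      exact sub_mem (memII1) (memII2)
    | (n+2) =>
      by_cases hn : (n:ℤ)+2 ≤ (k:ℤ)+1
      · have hs := star (k := k) hQ hP ((n:ℤ)+1) (by omega) (by omega)
        have hh : X 1 ^ (n+2) * Wl P k ((n:ℤ)+2)
            = X 1 ^ (n+1) * Wl P k ((n:ℤ)+1) - X 1 * (X 1 ^ n * Wl P k (n:ℤ))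
              + X 0 * (X 1 ^ (n+1) * Wl P k ((n:ℤ)-1)) := by
          rw [show ((n:ℤ)+1)+1 = (n:ℤ)+2 by ring, show ((n:ℤ)+1)-1 = (n:ℤ) by ring,
            show ((n:ℤ)+1)-2 = (n:ℤ)-1 by ring] at hs
          linear_combination (X 1 ^ (n+1) : Rxy) * hs
        rw [show (((n+2 : ℕ)):ℤ) = (n:ℤ)+2 by push_cast; ring, hh]
        apply add_mem
        · apply sub_mem
          · have := ih (n+1) (by omega)
            rwa [show (((n+1 : ℕ)):ℤ) = (n:ℤ)+1 by push_cast; ring] at this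
          · exact Ideal.mul_mem_left _ _ (ih n (by omega))
        · match n with
          | 0 =>
            rw [show ((0:ℕ):ℤ)-1 = (-1 : ℤ) by norm_num, Wl_zero hP (-1) (Or.inr (by omega))]
            rw [mul_zero, mul_zero]
            exact zero_mem _
          | (m+1) =>
            rw [show ((m+1:ℕ):ℤ)-1 = (m:ℤ) by push_cast; ring]
            rw [show (X 0 * (X 1^(m+1+1) * Wl P k (m:ℤ)) : Rxy)
              = (X 0 * X 1^2) * (X 1^m * Wl P k (m:ℤ)) by ring]
            exact Ideal.mul_mem_left _ _ (ih m (by omega))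
      · rw [Wl_zero hP _ (Or.inl (by push_cast; omega)), mul_zero]
        exact zero_mem _

end Walls

section Claims

variable {Q P : ℤ → ℤ → Rxy} (hQ : IsQSU3 Q) (hP : IsPSU3 Q P) {k : ℕ}

lemma Wl_mem_Ml (j : ℕ) : Wl P k (j:ℤ) ∈ Ml P k :=
  Ideal.subset_span ⟨j, rfl⟩

include hQ hP in
lemma claim1aux (j : ℕ) : Wl P k (j:ℤ) ∈ II P k ⊔ (Ideal.span {X 1} * Ml P k) := by
  induction j using Nat.strong_induction_on with
  | _ j ih =>
    match j with
    | 0 =>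
      push_cast
      exact Ideal.mem_sup_left (by simpa [Wl] using memII1 (P := P) (k := k))
    | (n+1) =>
      by_cases hn : (n:ℤ)+1 ≤ (k:ℤ)+1
      · have hs := star (k := k) hQ hP ((n:ℤ)+1) (by omega) hn
        have heq : Wl P k ((n:ℤ)+1)
            = X 1 * Wl P k ((n:ℤ)+2) + Wl P k (n:ℤ) - X 0 * Wl P k ((n:ℤ)-1) := by
          rw [show ((n:ℤ)+1)+1 = (n:ℤ)+2 by ring, show ((n:ℤ)+1)-1 = (n:ℤ) by ring,
            show ((n:ℤ)+1)-2 = (n:ℤ)-1 by ring] at hs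
          linear_combination -hs
        rw [show (((n+1 : ℕ)):ℤ) = (n:ℤ)+1 by push_cast; ring, heq]
        refine sub_mem (add_mem (Ideal.mem_sup_right (Ideal.mul_mem_mul
          (Ideal.mem_span_singleton_self (X 1)) ?_)) (ih n (by omega))) ?_
        · have : ((n:ℤ)+2) = (((n+2:ℕ)):ℤ) := by push_cast; ring
          rw [this]
          exact Wl_mem_Ml (n+2)
        · match n with
          | 0 =>
            rw [show ((0:ℕ):ℤ)-1 = (-1 : ℤ) by norm_num, Wl_zero hP (-1) (Or.inr (by omega)),
              mul_zero]
            exact zero_mem _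
          | (m+1) =>
            rw [show ((m+1:ℕ):ℤ)-1 = ((m:ℕ):ℤ) by push_cast; ring]
            exact Ideal.mul_mem_left _ _ (ih m (by omega))
      · rw [Wl_zero hP _ (Or.inl (by push_cast; omega))]
        exact zero_mem _

include hQ hP in
lemma claim1 : Ml P k ≤ II P k ⊔ (Ideal.span {X 1} * Ml P k) := by
  rw [Ml, Ideal.span_le]
  rintro g ⟨j, rfl⟩
  exact claim1aux hQ hP j

include hQ hP in
lemma claim2 (m : ℕ) : Ml P k ≤ II P k ⊔ (Ideal.span {X 1 ^ m} * Ml P k) := by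
  induction m with
  | zero =>
    rw [pow_zero, Ideal.span_singleton_one, Ideal.top_mul]
    exact le_sup_right
  | succ m ih =>
    refine le_trans ih (sup_le le_sup_left ?_)
    have h2 : Ideal.span {X 1 ^ m} * Ml P k
        ≤ Ideal.span {X 1 ^ m} * (II P k ⊔ (Ideal.span {X 1} * Ml P k)) :=
      Ideal.mul_mono_right (claim1 hQ hP)
    refine le_trans h2 ?_
    rw [Ideal.mul_sup]
    apply sup_le
    · exact le_trans Ideal.mul_le_right le_sup_left
    · rw [← mul_assoc, Ideal.span_singleton_mul_span_singleton, ← pow_succ]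
      exact le_sup_right

include hQ hP in
lemma claim3 : Ideal.span {X 1 ^ (k+1)} * Ml P k ≤ II P k := by
  rw [Ideal.mul_le]
  intro r hr s hs
  have hmain : ∀ s ∈ Ml P k, X 1 ^ (k+1) * s ∈ II P k := by
    intro s hs
    induction hs using Submodule.span_induction with
    | mem g hg =>
      obtain ⟨j, rfl⟩ := hg
      show X 1 ^ (k+1) * Wl P k (j:ℤ) ∈ II P k
      by_cases hj : j ≤ k+1
      · rw [show (k+1 : ℕ) = (k+1-j) + j by omega, pow_add, mul_assoc]
        exact Ideal.mul_mem_left _ _ (tpow hQ hP j)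
      · rw [Wl_zero hP _ (Or.inl (by push_cast; omega)), mul_zero]
        exact zero_mem _
    | zero => rw [mul_zero]; exact zero_mem _
    | add x y _ _ hx hy => rw [mul_add]; exact add_mem hx hy
    | smul c x _ hx =>
      rw [smul_eq_mul, mul_comm c x, ← mul_assoc]
      exact Ideal.mul_mem_right _ _ hx
  obtain ⟨c, rfl⟩ := Ideal.mem_span_singleton'.mp hr
  rw [mul_assoc]
  exact Ideal.mul_mem_left _ _ (hmain s hs)

include hQ hP in
lemma CWall : Ml P k ≤ II P k := by
  refine le_trans (claim2 hQ hP (k+1)) (sup_le le_rfl (claim3 hQ hP))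

end Claims

lemma mono_z (γ δ : ℕ) : sv ^ γ * tv ^ δ = xx ^ ((γ:ℤ)-2*δ) * yy ^ ((δ:ℤ)-2*γ) := by
  have hx := xx_ne; have hy := yy_ne
  rw [sv, tv, div_pow, div_pow, div_mul_div_comm,
    div_eq_iff (mul_ne_zero (pow_ne_zero _ (pow_ne_zero _ hy)) (pow_ne_zero _ (pow_ne_zero _ hx)))]
  rw [show ((yy^2)^γ*(xx^2)^δ : Kxy) = yy^(2*γ)*xx^(2*δ) by rw [← pow_mul, ← pow_mul]]
  rw [← zpow_natCast xx γ, ← zpow_natCast yy δ, ← zpow_natCast xx (2*δ), ← zpow_natCast yy (2*γ)]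
  rw [show (xx ^ ((γ:ℤ)-2*(δ:ℤ)) * yy ^ ((δ:ℤ)-2*(γ:ℤ)) * (yy^(((2*γ:ℕ)):ℤ) * xx^(((2*δ:ℕ)):ℤ)) : Kxy)
    = (xx ^ ((γ:ℤ)-2*δ) * xx^(((2*δ:ℕ)):ℤ)) * (yy ^ ((δ:ℤ)-2*γ) * yy^(((2*γ:ℕ)):ℤ)) by ring]
  rw [← zpow_add₀ hx, ← zpow_add₀ hy]
  congr 1
  · congr 1
    push_cast
    ring
  · congr 1
    push_cast
    ring

lemma evST_mono (γ δ : ℕ) : evST (X 0 ^ γ * X 1 ^ δ) = xx ^ ((γ:ℤ)-2*δ) * yy ^ ((δ:ℤ)-2*γ) := by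
  rw [evST_mul, evST_pow, evST_pow, evST_X0, evST_X1, mono_z]

lemma mono_expand (mu : Fin 2 →₀ ℕ) (c : ℤ) :
    (monomial mu c : Rxy) = C c * (X 0 ^ (mu 0) * X 1 ^ (mu 1)) := by
  rw [monomial_eq, Finsupp.prod_pow, Fin.prod_univ_two]

section Main

variable {Q P : ℤ → ℤ → Rxy} {m : ℕ → ℕ × ℕ → ℕ → Rxy} {k : ℕ}

def setS (P : ℤ → ℤ → Rxy) (m : ℕ → ℕ × ℕ → ℕ → Rxy) (k : ℕ) : Set (Rxy ⧸ II P k) :=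
  {z | ∃ (n : ℕ) (p : ℕ × ℕ), Bmem 0 n p ∧ p.1 + p.2 ≤ k ∧
    z = Ideal.Quotient.mk (II P k) (m 0 p n * P (p.1 : ℤ) (p.2 : ℤ))}

lemma wall_case (hQ : IsQSU3 Q) (hP : IsPSU3 Q P) (γ δ c d : ℕ) (h : c + d = k+1) :
    Ideal.Quotient.mk (II P k) (X 0 ^ γ * X 1 ^ δ * P (c:ℤ) (d:ℤ))
      ∈ AddSubgroup.closure (setS P m k) := by
  have hc : (c:ℤ) = (k:ℤ)+1-(d:ℤ) := by omega
  have hPm : P (c:ℤ) (d:ℤ) ∈ II P k := by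
    rw [hc]
    exact CWall hQ hP (Wl_mem_Ml d)
  have : Ideal.Quotient.mk (II P k) (X 0 ^ γ * X 1 ^ δ * P (c:ℤ) (d:ℤ)) = 0 :=
    Ideal.Quotient.eq_zero_iff_mem.mpr (Ideal.mul_mem_left _ _ hPm)
  rw [this]
  exact zero_mem _

lemma gen_case (hm : IsMono m) (γ δ c d : ℕ) (hcd : c + d ≤ k)
    (hχ : 3*((γ:ℤ)-δ) = (c:ℤ)-d) :
    Ideal.Quotient.mk (II P k) (X 0 ^ γ * X 1 ^ δ * P (c:ℤ) (d:ℤ))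
      ∈ AddSubgroup.closure (setS P m k) := by
  have hγ' : γ ≤ c + 2*δ := by omega
  set nn : ℕ := c + 2*δ - γ with hnn_def
  have hnn : (nn:ℤ) = (c:ℤ)+2*δ-γ := by omega
  have bmem : Bmem 0 nn (c, d) := by
    refine ⟨?_, by simp only; omega, by simp only; omega⟩
    show ((c:ℤ) - 0) ≡ (d:ℤ) [ZMOD 3]
    exact (Int.modEq_iff_dvd).mpr ⟨(δ:ℤ)-γ, by omega⟩
  have m_eq : m 0 (c, d) nn = X 0 ^ γ * X 1 ^ δ := by
    apply evST_inj
    rw [hm 0 nn (c, d) (by norm_num) bmem, evST_mono]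
    show xx ^ ((c:ℤ) - 0 - nn) * yy ^ ((d:ℤ) - nn) = _
    rw [show (c:ℤ) - 0 - nn = (γ:ℤ)-2*δ by omega, show (d:ℤ) - nn = (δ:ℤ)-2*γ by omega]
  apply AddSubgroup.subset_closure
  exact ⟨nn, (c, d), bmem, hcd, by rw [m_eq]⟩

end Main

section Main2

variable {Q P : ℤ → ℤ → Rxy} {m : ℕ → ℕ × ℕ → ℕ → Rxy} {k : ℕ}

lemma main_ind (hQ : IsQSU3 Q) (hP : IsPSU3 Q P) (hm : IsMono m) (N : ℕ) :
    ∀ γ δ c d : ℕ, c + d ≤ k+1 →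
      (3*((γ:ℤ)-δ) - ((c:ℤ)-d)).natAbs ≤ N →
      Ideal.Quotient.mk (II P k) (X 0 ^ γ * X 1 ^ δ * P (c:ℤ) (d:ℤ))
        ∈ AddSubgroup.closure (setS P m k) := by
  induction N with
  | zero =>
    intro γ δ c d hlev hN
    by_cases hw : c + d = k+1
    · exact wall_case hQ hP γ δ c d hw
    · exact gen_case hm γ δ c d (by omega) (by omega)
  | succ N ih =>
    intro γ δ c d hlev hN
    by_cases hw : c + d = k+1
    · exact wall_case hQ hP γ δ c d hw
    have hcd : c + d ≤ k := by omega
    rcases lt_trichotomy (3*((γ:ℤ)-δ) - ((c:ℤ)-d)) 0 with hneg | hzero | hpos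
    · -- use R2
      have hr := R2 hQ hP (c:ℤ) (d:ℤ) (Int.natCast_nonneg c) (Int.natCast_nonneg d)
      have hsplit : X 0 ^ γ * X 1 ^ δ * P (c:ℤ) (d:ℤ)
          = X 0 ^ γ * X 1 ^ δ * P (c:ℤ) ((d:ℤ)+1)
            + X 0 ^ (γ+1) * X 1 ^ (δ+1) * P ((c:ℤ)-1) (d:ℤ)
            + X 0 ^ (γ+1) * X 1 ^ δ * P ((c:ℤ)+1) ((d:ℤ)-1) := by
        linear_combination (X 0 ^ γ * X 1 ^ δ : Rxy) * hr
      rw [hsplit, map_add, map_add]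
      refine add_mem (add_mem ?_ ?_) ?_
      · rw [show ((d:ℤ)+1) = (((d+1:ℕ)):ℤ) by push_cast; ring]
        exact ih γ δ c (d+1) (by omega) (by omega)
      · rcases Nat.eq_zero_or_pos c with hc0 | hc1
        · rw [hP.1 ((c:ℤ)-1) (d:ℤ) (Or.inl (by omega)), mul_zero, map_zero]
          exact zero_mem _
        · rw [show ((c:ℤ)-1) = (((c-1:ℕ)):ℤ) by omega]
          exact ih (γ+1) (δ+1) (c-1) d (by omega) (by omega)
      · rcases Nat.eq_zero_or_pos d with hd0 | hd1
        · rw [hP.1 ((c:ℤ)+1) ((d:ℤ)-1) (Or.inr (by omega)), mul_zero, map_zero]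
          exact zero_mem _
        · rw [show ((d:ℤ)-1) = (((d-1:ℕ)):ℤ) by omega, show ((c:ℤ)+1) = (((c+1:ℕ)):ℤ) by push_cast; ring]
          exact ih (γ+1) δ (c+1) (d-1) (by omega) (by omega)
    · exact gen_case hm γ δ c d hcd (by omega)
    · -- use R1
      have hr := R1 hQ hP (c:ℤ) (d:ℤ) (Int.natCast_nonneg c) (Int.natCast_nonneg d)
      have hsplit : X 0 ^ γ * X 1 ^ δ * P (c:ℤ) (d:ℤ)
          = X 0 ^ γ * X 1 ^ δ * P ((c:ℤ)+1) (d:ℤ)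
            + X 0 ^ (γ+1) * X 1 ^ (δ+1) * P (c:ℤ) ((d:ℤ)-1)
            + X 0 ^ γ * X 1 ^ (δ+1) * P ((c:ℤ)-1) ((d:ℤ)+1) := by
        linear_combination (X 0 ^ γ * X 1 ^ δ : Rxy) * hr
      rw [hsplit, map_add, map_add]
      refine add_mem (add_mem ?_ ?_) ?_
      · rw [show ((c:ℤ)+1) = (((c+1:ℕ)):ℤ) by push_cast; ring]
        exact ih γ δ (c+1) d (by omega) (by omega)
      · rcases Nat.eq_zero_or_pos d with hd0 | hd1
        · rw [hP.1 (c:ℤ) ((d:ℤ)-1) (Or.inr (by omega)), mul_zero, map_zero]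
          exact zero_mem _
        · rw [show ((d:ℤ)-1) = (((d-1:ℕ)):ℤ) by omega]
          exact ih (γ+1) (δ+1) c (d-1) (by omega) (by omega)
      · rcases Nat.eq_zero_or_pos c with hc0 | hc1
        · rw [hP.1 ((c:ℤ)-1) ((d:ℤ)+1) (Or.inl (by omega)), mul_zero, map_zero]
          exact zero_mem _
        · rw [show ((c:ℤ)-1) = (((c-1:ℕ)):ℤ) by omega, show ((d:ℤ)+1) = (((d+1:ℕ)):ℤ) by push_cast; ring]
          exact ih γ (δ+1) (c-1) (d+1) (by omega) (by omega)

end Main2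


theorem stmt_9 (Q P : ℤ → ℤ → Rxy) (hQ : IsQSU3 Q) (hP : IsPSU3 Q P)
    (m : ℕ → ℕ × ℕ → ℕ → Rxy) (hm : IsMono m)
    (k : ℕ) (hk : 1 ≤ k) :
    AddSubgroup.closure
      {z : Rxy ⧸ (Ideal.span ({P ((k : ℤ) + 1) 0, P ((k : ℤ) + 2) 0} : Set Rxy)) |
        ∃ (n : ℕ) (p : ℕ × ℕ), Bmem 0 n p ∧ p.1 + p.2 ≤ k ∧
          z = Ideal.Quotient.mk (Ideal.span ({P ((k : ℤ) + 1) 0, P ((k : ℤ) + 2) 0} : Set Rxy))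
                (m 0 p n * P (p.1 : ℤ) (p.2 : ℤ))} = ⊤ := by
  rw [eq_top_iff]
  intro z _
  obtain ⟨f, rfl⟩ := Ideal.Quotient.mk_surjective z
  show Ideal.Quotient.mk (II P k) f ∈ AddSubgroup.closure (setS P m k)
  rw [← support_sum_monomial_coeff f, map_sum]
  apply AddSubgroup.sum_mem
  intro mu _
  rw [mono_expand, C_int, ← zsmul_eq_mul, map_zsmul]
  apply zsmul_mem
  have h1 : (X 0 ^ (mu 0) * X 1 ^ (mu 1) : Rxy)
      = X 0 ^ (mu 0) * X 1 ^ (mu 1) * P (((0:ℕ)):ℤ) (((0:ℕ)):ℤ) := by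
    rw [show (((0:ℕ)):ℤ) = (0:ℤ) by norm_num, P00 hQ hP, mul_one]
  rw [h1]
  exact main_ind hQ hP hm ((3*(((mu 0 : ℕ):ℤ)-(mu 1 : ℕ)) - (((0:ℕ):ℤ)-((0:ℕ):ℤ))).natAbs)
    (mu 0) (mu 1) 0 0 (by omega) le_rfl
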